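/- Let θ ∈ ℝ^p, L ≥ 1, and suppose the largest entry magnitude strictly exceeds the ⌈L²⌉-th largest: |θ|_(1) > |θ|_(⌈L²⌉). Let c ≥ 0 be the smallest nonnegative value such that the soft-thresholded vector β̃ = sign(θ)·[|θ|-c]_+ satisfies ‖β̃‖₁/‖β̃‖₂ ≤ L. Then β* = β̃/‖β̃‖₂ solves min ‖β - θ‖₂² subject to ‖β‖₂ = 1 and ‖β‖₁ ≤ L. -/

import Mathlib

open Finset Real

/-- Cauchy–Schwarz helper: `∑ f g ≤ √(∑ f²) * √(∑ g²)` for real sequences. -/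
lemma cs_sum {ι : Type*} (s : Finset ι) (f g : ι → ℝ) (hf : ∀ i, 0 ≤ f i) (hg : ∀ i, 0 ≤ g i) :
    (∑ i ∈ s, f i * g i) ≤ Real.sqrt (∑ i ∈ s, f i ^ 2) * Real.sqrt (∑ i ∈ s, g i ^ 2) := by
  have h := Finset.sum_mul_sq_le_sq_mul_sq s f g
  have hnn : 0 ≤ ∑ i ∈ s, f i * g i :=
    Finset.sum_nonneg fun i _ => mul_nonneg (hf i) (hg i)
  calc (∑ i ∈ s, f i * g i) = Real.sqrt ((∑ i ∈ s, f i * g i) ^ 2) := (Real.sqrt_sq hnn).symm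
    _ ≤ Real.sqrt ((∑ i ∈ s, f i ^ 2) * ∑ i ∈ s, g i ^ 2) := Real.sqrt_le_sqrt h
    _ = _ := Real.sqrt_mul (Finset.sum_nonneg fun i _ => sq_nonneg _) _

lemma sign_mul_self'' (x : ℝ) : Real.sign x * x = |x| := by
  rcases lt_trichotomy x 0 with h | h | h
  · rw [Real.sign_of_neg h, abs_of_neg h]; ring
  · simp [h]
  · rw [Real.sign_of_pos h, abs_of_pos h]; ring

/-- If the largest entry magnitude of `θ` strictly exceeds the `⌈L²⌉`-th largest (i.e. fewer
than `⌈L²⌉` entries attain the maximal magnitude), and `c` is the smallest nonnegative value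
such that the soft-thresholded vector `β̃ = sign(θ)·[|θ|-c]₊` satisfies `‖β̃‖₁/‖β̃‖₂ ≤ L`,
then `β* = β̃/‖β̃‖₂` solves `min ‖β-θ‖₂²` s.t. `‖β‖₂ = 1`, `‖β‖₁ ≤ L`. -/
theorem soft_threshold_solves_proximal {p : ℕ}
    (hne : (Finset.univ : Finset (Fin p)).Nonempty)
    (θ : Fin p → ℝ) (L : ℝ) (hL : 1 ≤ L) (hLp : ⌈L ^ 2⌉₊ ≤ p)
    (hgap : (Finset.univ.filter
        (fun j => |θ j| = Finset.univ.sup' hne (fun i => |θ i|))).card < ⌈L ^ 2⌉₊)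
    (c : ℝ)
    (hc : IsLeast {c' : ℝ | 0 ≤ c' ∧
        (∑ j, max (|θ j| - c') 0) / Real.sqrt (∑ j, (max (|θ j| - c') 0) ^ 2) ≤ L} c) :
    let βt : Fin p → ℝ := fun j => Real.sign (θ j) * max (|θ j| - c) 0
    let βs : Fin p → ℝ := fun j => βt j / Real.sqrt (∑ i, (βt i) ^ 2)
    (Real.sqrt (∑ i, (βs i) ^ 2) = 1 ∧ ∑ i, |βs i| ≤ L) ∧
    ∀ β : Fin p → ℝ, Real.sqrt (∑ i, (β i) ^ 2) = 1 → (∑ i, |β i|) ≤ L →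
      ∑ i, (βs i - θ i) ^ 2 ≤ ∑ i, (β i - θ i) ^ 2 := by
  intro βt βs
  obtain ⟨⟨hc0, hcL⟩, hcmin⟩ := hc
  set M : ℝ := Finset.univ.sup' hne (fun i => |θ i|) with hM
  obtain ⟨j₀, -, hj₀⟩ := Finset.exists_mem_eq_sup' hne (fun i => |θ i|)
  set m : Fin p → ℝ := fun j => max (|θ j| - c) 0 with hm
  have hm0 : ∀ j, 0 ≤ m j := fun j => le_max_right _ _
  have hL0 : (0:ℝ) ≤ L := le_trans zero_le_one hL
  -- the number of maximizers
  set K : Finset (Fin p) := Finset.univ.filter (fun j => |θ j| = M) with hK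
  have hj₀K : j₀ ∈ K := by simp [hK, hj₀.symm]; rfl
  have hKcard1 : 1 ≤ K.card := Finset.card_pos.mpr ⟨j₀, hj₀K⟩
  have hKL2 : (K.card : ℝ) ≤ L ^ 2 := by
    have h1 : (K.card : ℝ) ≤ (⌈L ^ 2⌉₊ : ℝ) - 1 := by
      have := hgap
      have : K.card + 1 ≤ ⌈L ^ 2⌉₊ := hgap
      have := (Nat.cast_le (α := ℝ)).mpr this
      push_cast at this; linarith
    have h2 : (⌈L ^ 2⌉₊ : ℝ) < L ^ 2 + 1 := Nat.ceil_lt_add_one (by positivity)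
    linarith
  -- step: c < M
  have hcM : c < M := by
    have hKp : K.card < p := lt_of_lt_of_le hgap hLp
    -- there is a non-maximizer
    have hScompl : (Finset.univ.filter (fun j => |θ j| < M)).Nonempty := by
      by_contra h
      rw [Finset.not_nonempty_iff_eq_empty, Finset.filter_eq_empty_iff] at h
      have : K = Finset.univ := by
        apply Finset.eq_univ_of_forall
        intro j
        have hle : |θ j| ≤ M := Finset.le_sup' (fun i => |θ i|) (Finset.mem_univ j)
        have := h (Finset.mem_univ j)
        simp only [hK, Finset.mem_filter, Finset.mem_univ, true_and]
        exact le_antisymm hle (not_lt.mp this)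
      rw [this, Finset.card_univ, Fintype.card_fin] at hKp
      exact lt_irrefl _ hKp
    set S := Finset.univ.filter (fun j => |θ j| < M) with hS
    set M₂ : ℝ := S.sup' hScompl (fun i => |θ i|) with hM₂
    obtain ⟨j₁, hj₁S, hj₁⟩ := Finset.exists_mem_eq_sup' hScompl (fun i => |θ i|)
    have hM₂M : M₂ < M := by
      rw [hM₂, hj₁]; exact (Finset.mem_filter.mp hj₁S).2
    have hM₂0 : 0 ≤ M₂ := by rw [hM₂, hj₁]; exact abs_nonneg _
    set c' : ℝ := (M + M₂) / 2 with hc'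
    set t : ℝ := (M - M₂) / 2 with ht
    have ht0 : 0 < t := by rw [ht]; linarith
    have hval : ∀ j, max (|θ j| - c') 0 = if j ∈ K then t else 0 := by
      intro j
      by_cases hjK : j ∈ K
      · have : |θ j| = M := (Finset.mem_filter.mp hjK).2
        rw [if_pos hjK, this]
        rw [max_eq_left (by rw [hc']; linarith)]
        rw [hc', ht]; ring
      · have hlt : |θ j| < M := by
          have hle : |θ j| ≤ M := Finset.le_sup' (fun i => |θ i|) (Finset.mem_univ j)
          rcases lt_or_eq_of_le hle with h | h
          · exact h
          · exact absurd (by simp [hK, h]) hjK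
        have hjS : j ∈ S := by simp [hS, hlt]
        have hle2 : |θ j| ≤ M₂ := Finset.le_sup' (fun i => |θ i|) hjS
        rw [if_neg hjK, max_eq_right (by rw [hc']; linarith)]
    have hsum1 : (∑ j, max (|θ j| - c') 0) = K.card * t := by
      rw [Finset.sum_congr rfl (fun j _ => hval j)]
      rw [Finset.sum_ite_mem, Finset.univ_inter, Finset.sum_const, nsmul_eq_mul]
    have hsum2 : (∑ j, (max (|θ j| - c') 0) ^ 2) = K.card * t ^ 2 := by
      have hv2 : ∀ j : Fin p, (max (|θ j| - c') 0) ^ 2 = if j ∈ K then t ^ 2 else 0 := by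
        intro j; rw [hval j]; split <;> simp
      rw [Finset.sum_congr rfl (fun j _ => hv2 j)]
      rw [Finset.sum_ite_mem, Finset.univ_inter, Finset.sum_const, nsmul_eq_mul]
    have hc'mem : c' ∈ {c' : ℝ | 0 ≤ c' ∧
        (∑ j, max (|θ j| - c') 0) / Real.sqrt (∑ j, (max (|θ j| - c') 0) ^ 2) ≤ L} := by
      constructor
      · rw [hc']
        have hM0 : 0 ≤ M := by rw [hM, hj₀]; exact abs_nonneg _
        linarith
      · rw [hsum1, hsum2]
        rw [Real.sqrt_mul (Nat.cast_nonneg _), Real.sqrt_sq ht0.le]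
        rw [show (K.card : ℝ) * t = Real.sqrt K.card * Real.sqrt K.card * t by
          rw [Real.mul_self_sqrt (Nat.cast_nonneg _)]]
        rw [mul_assoc, mul_div_assoc, div_self (by positivity), mul_one]
        calc Real.sqrt K.card ≤ Real.sqrt (L ^ 2) := Real.sqrt_le_sqrt hKL2
          _ = L := Real.sqrt_sq hL0
    have := hcmin hc'mem
    calc c ≤ c' := this
      _ < M := by rw [hc']; linarith
  -- positivity of the normalizer
  have hmj₀ : 0 < m j₀ := by
    have hcj : c < |θ j₀| := by rw [hM, hj₀] at hcM; exact hcM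
    show (0:ℝ) < max (|θ j₀| - c) 0
    exact lt_max_of_lt_left (by linarith)
  have hN2 : 0 < ∑ i, (m i) ^ 2 :=
    Finset.sum_pos' (fun i _ => sq_nonneg _) ⟨j₀, Finset.mem_univ _, by positivity⟩
  set N : ℝ := Real.sqrt (∑ i, (m i) ^ 2) with hNdef
  have hN : 0 < N := Real.sqrt_pos.mpr hN2
  have hNsq : N ^ 2 = ∑ i, (m i) ^ 2 := Real.sq_sqrt hN2.le
  -- basic identities about βt
  have habs : ∀ j, |βt j| = m j := by
    intro j
    show |Real.sign (θ j) * m j| = m j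
    rw [abs_mul, abs_of_nonneg (hm0 j)]
    by_cases h : θ j = 0
    · have : m j = 0 := by
        show max (|θ j| - c) 0 = 0
        rw [h, abs_zero, zero_sub]
        exact max_eq_right (by linarith)
      simp [this]
    · rcases lt_or_gt_of_ne h with h' | h'
      · rw [Real.sign_of_neg h']; norm_num
      · rw [Real.sign_of_pos h']; norm_num
  have hsq : ∀ j, (βt j) ^ 2 = (m j) ^ 2 := fun j => by
    rw [← sq_abs, habs]
  have hsumsq : (∑ i, (βt i) ^ 2) = ∑ i, (m i) ^ 2 :=
    Finset.sum_congr rfl fun j _ => hsq j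
  have hβsN : ∀ j, βs j = βt j / N := by
    intro j; show βt j / Real.sqrt (∑ i, (βt i)^2) = βt j / N
    rw [hsumsq]
  -- inner products
  have hmul : ∀ j, βt j * θ j = (m j) ^ 2 + c * m j := by
    intro j
    show Real.sign (θ j) * m j * θ j = (m j) ^ 2 + c * m j
    rcases le_or_gt (|θ j| - c) 0 with h | h
    · have hmz : m j = 0 := by rw [hm]; exact max_eq_right h
      simp [hmz]
    · have hmz : m j = |θ j| - c := by rw [hm]; exact max_eq_left h.le
      have : Real.sign (θ j) * θ j = |θ j| := sign_mul_self'' (θ j)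
      calc Real.sign (θ j) * m j * θ j = (Real.sign (θ j) * θ j) * m j := by ring
        _ = |θ j| * m j := by rw [this]
        _ = (m j) ^ 2 + c * m j := by rw [hmz]; ring
  -- feasibility of βs
  have hβs_sq : (∑ i, (βs i) ^ 2) = 1 := by
    have : ∀ i, (βs i) ^ 2 = (m i) ^ 2 / N ^ 2 := by
      intro i; rw [hβsN i, div_pow, hsq i]
    rw [Finset.sum_congr rfl fun i _ => this i, ← Finset.sum_div, ← hNsq,
      div_self (by positivity)]
  have hβs_l1 : (∑ i, |βs i|) = (∑ i, m i) / N := by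
    have : ∀ i, |βs i| = m i / N := by
      intro i; rw [hβsN i, abs_div, habs i, abs_of_pos hN]
    rw [Finset.sum_congr rfl fun i _ => this i, Finset.sum_div]
  have hfeas1 : Real.sqrt (∑ i, (βs i) ^ 2) = 1 := by rw [hβs_sq, Real.sqrt_one]
  have hfeas2 : (∑ i, |βs i|) ≤ L := by
    rw [hβs_l1]; exact hcL
  refine ⟨⟨hfeas1, hfeas2⟩, ?_⟩
  -- key: if c > 0 then the ratio equals L
  have hratio : c * ((∑ i, m i) / N) = c * L := by
    rcases eq_or_lt_of_le hc0 with h | h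
    · rw [← h]; ring
    · congr 1
      by_contra hne'
      have hSlt : (∑ i, m i) / N < L := lt_of_le_of_ne hcL hne'
      set S := (∑ i, m i) / N with hSdef
      have hp1 : (0:ℝ) < p := by
        have := Finset.card_pos.mpr hne
        rw [Finset.card_univ, Fintype.card_fin] at this
        exact_mod_cast this
      set δ : ℝ := min c ((L - S) * N / p) with hδ
      have hδ0 : 0 < δ := lt_min h (div_pos (mul_pos (by linarith) hN) hp1)
      have hδc : δ ≤ c := min_le_left _ _
      have hδ2 : δ ≤ (L - S) * N / p := min_le_right _ _
      -- show c - δ is in the set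
      have hmem : (c - δ) ∈ {c' : ℝ | 0 ≤ c' ∧
          (∑ j, max (|θ j| - c') 0) / Real.sqrt (∑ j, (max (|θ j| - c') 0) ^ 2) ≤ L} := by
        refine ⟨by linarith, ?_⟩
        have hub : ∀ j, max (|θ j| - (c - δ)) 0 ≤ m j + δ := by
          intro j
          rw [hm]
          simp only [max_le_iff]
          constructor
          · have : |θ j| - c ≤ max (|θ j| - c) 0 := le_max_left _ _
            linarith
          · have := hm0 j; simp only [hm] at this ⊢; linarith
        have hlb : ∀ j, m j ≤ max (|θ j| - (c - δ)) 0 := by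
          intro j
          rw [hm]
          apply max_le_max _ le_rfl
          linarith
        have hnum : (∑ j, max (|θ j| - (c - δ)) 0) ≤ (∑ j, m j) + p * δ := by
          calc (∑ j, max (|θ j| - (c - δ)) 0) ≤ ∑ j, (m j + δ) :=
              Finset.sum_le_sum fun j _ => hub j
            _ = (∑ j, m j) + p * δ := by
              rw [Finset.sum_add_distrib, Finset.sum_const, Finset.card_univ,
                Fintype.card_fin, nsmul_eq_mul]
        have hden : N ≤ Real.sqrt (∑ j, (max (|θ j| - (c - δ)) 0) ^ 2) := by
          apply Real.sqrt_le_sqrt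
          apply Finset.sum_le_sum
          intro j _
          exact pow_le_pow_left₀ (hm0 j) (hlb j) 2
        have hnum0 : 0 ≤ (∑ j, max (|θ j| - (c - δ)) 0) :=
          Finset.sum_nonneg fun j _ => le_max_right _ _
        calc (∑ j, max (|θ j| - (c - δ)) 0) / Real.sqrt (∑ j, (max (|θ j| - (c - δ)) 0) ^ 2)
            ≤ (∑ j, max (|θ j| - (c - δ)) 0) / N :=
              div_le_div_of_nonneg_left hnum0 hN hden
          _ ≤ ((∑ j, m j) + p * δ) / N := by gcongr
          _ ≤ L := by
              rw [div_le_iff₀ hN]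
              have h1 : δ * (p:ℝ) ≤ (L - S) * N := (le_div_iff₀ hp1).mp hδ2
              have hSN : (∑ j, m j) = S * N := by
                rw [hSdef]; field_simp
              have h2 : (L - S) * N = L * N - S * N := by ring
              rw [hSN]; linarith
      have := hcmin hmem
      linarith
  -- inner product of βs with θ
  have hinner_βs : (∑ i, βs i * θ i) = N + c * ((∑ i, m i) / N) := by
    have : ∀ i, βs i * θ i = ((m i) ^ 2 + c * m i) / N := by
      intro i; rw [hβsN i, div_mul_eq_mul_div, hmul i]
    rw [Finset.sum_congr rfl fun i _ => this i, ← Finset.sum_div]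
    rw [Finset.sum_add_distrib, ← Finset.mul_sum, ← hNsq]
    field_simp
  -- final comparison
  intro β hβ2 hβ1
  have hβ2' : (∑ i, (β i) ^ 2) = 1 := Real.sqrt_eq_one.mp hβ2
  -- upper bound on inner product for any feasible β
  have hinner_β : (∑ i, β i * θ i) ≤ N + c * L := by
    have step1 : (∑ i, β i * θ i) ≤ ∑ i, |β i| * |θ i| := by
      apply Finset.sum_le_sum
      intro i _
      rw [← abs_mul]
      exact le_abs_self _
    have step2 : (∑ i, |β i| * |θ i|) ≤ (∑ i, |β i| * m i) + c * ∑ i, |β i| := by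
      rw [Finset.mul_sum, ← Finset.sum_add_distrib]
      apply Finset.sum_le_sum
      intro i _
      have h1 : |θ i| - c ≤ m i := le_max_left _ _
      nlinarith [abs_nonneg (β i)]
    have step3 : (∑ i, |β i| * m i) ≤ N := by
      have := cs_sum Finset.univ (fun i => |β i|) m (fun i => abs_nonneg _) hm0
      simp only [sq_abs] at this
      rw [hβ2', Real.sqrt_one, one_mul] at this
      exact this
    have step4 : c * (∑ i, |β i|) ≤ c * L := mul_le_mul_of_nonneg_left hβ1 hc0
    linarith
  have hkey : (∑ i, β i * θ i) ≤ ∑ i, βs i * θ i := by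
    rw [hinner_βs, hratio]; exact hinner_β
  -- expand the squares
  have expand : ∀ x : Fin p → ℝ, (∑ i, (x i - θ i) ^ 2)
      = (∑ i, (x i)^2) - 2 * (∑ i, x i * θ i) + ∑ i, (θ i)^2 := by
    intro x
    rw [Finset.mul_sum, ← Finset.sum_sub_distrib, ← Finset.sum_add_distrib]
    apply Finset.sum_congr rfl
    intro i _
    ring
  rw [expand, expand, hβ2', hβs_sq]
  linarith
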